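/- For an edge e of the complete graph K_n with n ≥ 3, the graph K_n − e is the unique graph with maximum SLEE among all graphs on n vertices with diameter 2. -/

import Mathlib

open scoped Classical

variable {V : Type*}

/-- The signless Laplacian matrix `Q = D + A` of a graph. -/
noncomputable def sLap (G : SimpleGraph V) [Fintype V] : Matrix V V ℝ :=
  Matrix.diagonal (fun v => (G.degree v : ℝ)) + G.adjMatrix ℝ

theorem sLap_isHermitian (G : SimpleGraph V) [Fintype V] : (sLap G).IsHermitian := by
  unfold sLap
  rw [Matrix.IsHermitian, Matrix.conjTranspose_eq_transpose_of_trivial, Matrix.transpose_add,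
    Matrix.diagonal_transpose, SimpleGraph.transpose_adjMatrix]

/-- The Laplacian matrix `L = D - A` of a graph. -/
noncomputable def lap (G : SimpleGraph V) [Fintype V] : Matrix V V ℝ :=
  Matrix.diagonal (fun v => (G.degree v : ℝ)) - G.adjMatrix ℝ

theorem lap_isHermitian (G : SimpleGraph V) [Fintype V] : (lap G).IsHermitian := by
  unfold lap
  rw [Matrix.IsHermitian, Matrix.conjTranspose_eq_transpose_of_trivial, Matrix.transpose_sub,
    Matrix.diagonal_transpose, SimpleGraph.transpose_adjMatrix]

/-- The signless Laplacian Estrada index: the sum of `exp qᵢ` over the eigenvalues of `Q`. -/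
noncomputable def SLEE (G : SimpleGraph V) [Fintype V] : ℝ :=
  ∑ i, Real.exp ((sLap_isHermitian G).eigenvalues i)

/-- The Laplacian Estrada index: the sum of `exp μᵢ` over the eigenvalues of `L`. -/
noncomputable def LEE (G : SimpleGraph V) [Fintype V] : ℝ :=
  ∑ i, Real.exp ((lap_isHermitian G).eigenvalues i)

/-- Semi-edge walks of length `k` from `x` to `y`: a sequence of `k+1` vertices and `k`
edges of `G` such that consecutive vertices are (not necessarily distinct) endpoints of
the intervening edge. -/
def semiEdgeWalks (G : SimpleGraph V) (k : ℕ) (x y : V) :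
    Set ((Fin (k + 1) → V) × (Fin k → Sym2 V)) :=
  {w | w.1 0 = x ∧ w.1 (Fin.last k) = y ∧
    ∀ i : Fin k, w.2 i ∈ G.edgeSet ∧ w.1 i.castSucc ∈ w.2 i ∧ w.1 i.succ ∈ w.2 i}

/-- Closed semi-edge walks of length `k` in `G`. -/
def closedSemiEdgeWalks (G : SimpleGraph V) (k : ℕ) :
    Set ((Fin (k + 1) → V) × (Fin k → Sym2 V)) :=
  {w | w.1 0 = w.1 (Fin.last k) ∧
    ∀ i : Fin k, w.2 i ∈ G.edgeSet ∧ w.1 i.castSucc ∈ w.2 i ∧ w.1 i.succ ∈ w.2 i}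

/-- The number of connected components of a graph. -/
noncomputable def numComponents (G : SimpleGraph V) : ℕ := Nat.card G.ConnectedComponent

/-- A cut vertex: a vertex whose removal increases the number of connected components. -/
def IsCutVertex (G : SimpleGraph V) (v : V) : Prop :=
  numComponents G < numComponents (G.induce ({v}ᶜ : Set V))

/-- The number of cut vertices of a graph. -/
noncomputable def cutVertexCount (G : SimpleGraph V) [Fintype V] : ℕ :=
  (Finset.univ.filter (fun v => IsCutVertex G v)).card

/-- The graph obtained from `G` by adding the edge `uv`. -/
def addEdge (G : SimpleGraph V) (u v : V) : SimpleGraph V :=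
  G ⊔ SimpleGraph.fromEdgeSet {s(u, v)}

/-- A block of `G`: a maximal vertex set inducing a connected subgraph with no cut vertex. -/
def IsBlock (G : SimpleGraph V) (B : Set V) : Prop :=
  (G.induce B).Connected ∧ (∀ v : B, ¬ IsCutVertex (G.induce B) v) ∧
  ∀ C : Set V, B ⊆ C → (G.induce C).Connected → (∀ v : C, ¬ IsCutVertex (G.induce C) v) →
    B = C

open Matrix in
lemma trace_pow_eq_sum_eigenvalues [Fintype V] [DecidableEq V]
    {A : Matrix V V ℝ} (hA : A.IsHermitian) (k : ℕ) :
    (A ^ k).trace = ∑ i, hA.eigenvalues i ^ k := by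
  set U : Matrix V V ℝ := (hA.eigenvectorUnitary : Matrix V V ℝ) with hUdef
  have hU1 : U * star U = 1 := mem_unitaryGroup_iff.mp (hA.eigenvectorUnitary).2
  have hU2 : star U * U = 1 := mem_unitaryGroup_iff'.mp (hA.eigenvectorUnitary).2
  set d : V → ℝ := hA.eigenvalues with hddef
  have hsp : A = U * diagonal (RCLike.ofReal ∘ d) * star U := hA.spectral_theorem
  have hpow : A ^ k = U * (diagonal (RCLike.ofReal ∘ d)) ^ k * star U := by
    clear_value d U
    clear hddef hUdef
    induction k with
    | zero => simp [hU1]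
    | succ k ih =>
      rw [pow_succ, ih, pow_succ]
      conv_lhs => rw [hsp]
      simp only [Matrix.mul_assoc]
      rw [← Matrix.mul_assoc (star U) U, hU2, Matrix.one_mul]
  rw [hpow, Matrix.trace_mul_cycle, hU2, Matrix.one_mul,
    Matrix.diagonal_pow, Matrix.trace_diagonal]
  simp [Function.comp]

lemma SLEE_eq_tsum [Fintype V] (G : SimpleGraph V) :
    SLEE G = ∑' k : ℕ, ((sLap G) ^ k).trace / (Nat.factorial k : ℝ) := by
  classical
  unfold SLEE
  have h : ∀ i : V, Real.exp ((sLap_isHermitian G).eigenvalues i)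
      = ∑' k : ℕ, ((sLap_isHermitian G).eigenvalues i) ^ k / (Nat.factorial k : ℝ) := by
    intro i
    rw [Real.exp_eq_exp_ℝ, NormedSpace.exp_eq_tsum_div]
  simp_rw [h]
  rw [← Summable.tsum_finsetSum (fun i _ => Real.summable_pow_div_factorial _)]
  congr 1
  ext k
  rw [trace_pow_eq_sum_eigenvalues (sLap_isHermitian G) k, Finset.sum_div]

lemma SLEE_summable [Fintype V] (G : SimpleGraph V) :
    Summable (fun k : ℕ => ((sLap G) ^ k).trace / (Nat.factorial k : ℝ)) := by
  classical
  have h : (fun k : ℕ => ((sLap G) ^ k).trace / (Nat.factorial k : ℝ))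
      = fun k : ℕ => ∑ i, ((sLap_isHermitian G).eigenvalues i) ^ k / (Nat.factorial k : ℝ) := by
    ext k
    rw [trace_pow_eq_sum_eigenvalues (sLap_isHermitian G) k, Finset.sum_div]
  rw [h]
  exact summable_sum fun i _ => Real.summable_pow_div_factorial _

lemma sLap_apply_nonneg [Fintype V] (G : SimpleGraph V) (i j : V) : 0 ≤ sLap G i j := by
  classical
  simp only [sLap, Matrix.add_apply, Matrix.diagonal_apply]
  have h1 : (0:ℝ) ≤ G.adjMatrix ℝ i j := by simp [SimpleGraph.adjMatrix]; positivity
  by_cases h : i = j <;> simp [h] <;> positivity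

lemma sLap_apply_mono [Fintype V] {G H : SimpleGraph V} (h : G ≤ H) (i j : V) :
    sLap G i j ≤ sLap H i j := by
  classical
  have hdeg : G.degree i ≤ H.degree i := by
    apply Finset.card_le_card
    intro u hu
    rw [SimpleGraph.mem_neighborFinset] at *
    exact h hu
  have hadj : G.adjMatrix ℝ i j ≤ H.adjMatrix ℝ i j := by
    by_cases hg : G.Adj i j
    · simp [hg, h hg]
    · simp only [SimpleGraph.adjMatrix_apply, if_neg hg]
      by_cases hh : H.Adj i j <;> simp [hh]
  simp only [sLap, Matrix.add_apply, Matrix.diagonal_apply]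
  by_cases hij : i = j
  · simp only [if_pos hij]
    exact add_le_add (by exact_mod_cast hdeg) hadj
  · simp only [if_neg hij]
    exact add_le_add le_rfl hadj

lemma sLap_pow_apply_nonneg_mono [Fintype V] {G H : SimpleGraph V} (h : G ≤ H) (k : ℕ) :
    ∀ i j : V, 0 ≤ ((sLap G) ^ k) i j ∧ ((sLap G) ^ k) i j ≤ ((sLap H) ^ k) i j := by
  classical
  induction k with
  | zero =>
    intro i j
    constructor
    · by_cases hij : i = j <;> simp [Matrix.one_apply, hij]
    · simp
  | succ k ih =>
    intro i j
    rw [pow_succ, pow_succ, Matrix.mul_apply, Matrix.mul_apply]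
    constructor
    · exact Finset.sum_nonneg fun l _ =>
        mul_nonneg (ih i l).1 (sLap_apply_nonneg G l j)
    · refine Finset.sum_le_sum fun l _ => mul_le_mul (ih i l).2 (sLap_apply_mono h l j)
        (sLap_apply_nonneg G l j) ?_
      exact le_trans (ih i l).1 (ih i l).2

lemma trace_sLap_pow_nonneg [Fintype V] (G : SimpleGraph V) (k : ℕ) :
    0 ≤ ((sLap G) ^ k).trace :=
  Finset.sum_nonneg fun i _ => (sLap_pow_apply_nonneg_mono (le_refl G) k i i).1

lemma trace_sLap_pow_mono [Fintype V] {G H : SimpleGraph V} (h : G ≤ H) (k : ℕ) :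
    ((sLap G) ^ k).trace ≤ ((sLap H) ^ k).trace :=
  Finset.sum_le_sum fun i _ => (sLap_pow_apply_nonneg_mono h k i i).2

lemma SLEE_lt_SLEE [Fintype V] {G H : SimpleGraph V} (h : G < H) : SLEE G < SLEE H := by
  classical
  obtain ⟨hle, hne⟩ := lt_iff_le_and_ne.mp h
  obtain ⟨u, v, hH, hG⟩ : ∃ u v, H.Adj u v ∧ ¬ G.Adj u v := by
    by_contra hc
    push_neg at hc
    exact hne (le_antisymm hle fun a b hab => hc a b hab)
  have hdeg : ∀ w, G.degree w ≤ H.degree w := fun w => by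
    apply Finset.card_le_card
    intro x hx
    rw [SimpleGraph.mem_neighborFinset] at *
    exact hle hx
  have hdeglt : G.degree u < H.degree u := by
    apply Finset.card_lt_card
    constructor
    · intro w hw
      rw [SimpleGraph.mem_neighborFinset] at *
      exact hle hw
    · intro hsub
      have hv : v ∈ H.neighborFinset u := by
        rw [SimpleGraph.mem_neighborFinset]; exact hH
      have hv2 := hsub hv
      rw [SimpleGraph.mem_neighborFinset] at hv2
      exact hG hv2
  have hdiag : ∀ (G' : SimpleGraph V) (w : V), sLap G' w w = (G'.degree w : ℝ) := by
    intro G' w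
    simp [sLap, Matrix.add_apply, Matrix.diagonal_apply]
  have htr1 : (sLap G).trace < (sLap H).trace := by
    unfold Matrix.trace
    refine Finset.sum_lt_sum (fun w _ => ?_) ⟨u, Finset.mem_univ u, ?_⟩
    · simp only [Matrix.diag_apply, hdiag]
      exact_mod_cast hdeg w
    · simp only [Matrix.diag_apply, hdiag]
      exact_mod_cast hdeglt
  rw [SLEE_eq_tsum, SLEE_eq_tsum]
  apply Summable.tsum_lt_tsum_of_nonneg (i := 1)
  · intro k
    exact div_nonneg (trace_sLap_pow_nonneg G k) (by positivity)
  · intro k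
    exact (div_le_div_iff_of_pos_right (by positivity)).mpr (trace_sLap_pow_mono hle k)
  · simp only [pow_one, Nat.factorial_one, Nat.cast_one, div_one]
    exact htr1
  · exact SLEE_summable H

lemma degree_congr {G : SimpleGraph V} (v : V) (h1 h2 : Fintype (G.neighborSet v)) :
    @SimpleGraph.degree V G v h1 = @SimpleGraph.degree V G v h2 :=
  congrArg (fun h => @SimpleGraph.degree V G v h) (Subsingleton.elim h1 h2)

lemma adjMatrix_congr [Fintype V] {G : SimpleGraph V} (h1 h2 : DecidableRel G.Adj) (i j : V) :
    @SimpleGraph.adjMatrix ℝ V G h1 _ _ i j = @SimpleGraph.adjMatrix ℝ V G h2 _ _ i j := by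
  simp only [SimpleGraph.adjMatrix_apply]
  split_ifs <;> rfl

lemma map_equiv_adj [Fintype V] (H : SimpleGraph V) (σ : V ≃ V) (u v : V) :
    (H.map σ.toEmbedding).Adj u v ↔ H.Adj (σ.symm u) (σ.symm v) := by
  simp only [SimpleGraph.map_adj, Equiv.coe_toEmbedding]
  constructor
  · rintro ⟨-, x, y, hxy, rfl, rfl⟩
    simpa using hxy
  · intro hxy
    exact ⟨fun h => hxy.ne (congrArg σ.symm h), σ.symm u, σ.symm v, hxy, by simp, by simp⟩

lemma sLap_map [Fintype V] (H : SimpleGraph V) (σ : V ≃ V) :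
    sLap (H.map σ.toEmbedding) = (sLap H).submatrix σ.symm σ.symm := by
  have hdeg : ∀ v, (H.map σ.toEmbedding).degree v = H.degree (σ.symm v) := by
    intro v
    have : (H.map σ.toEmbedding).neighborFinset v
        = (H.neighborFinset (σ.symm v)).map σ.toEmbedding := by
      ext u
      rw [SimpleGraph.mem_neighborFinset, map_equiv_adj]
      simp only [Finset.mem_map, Equiv.coe_toEmbedding]
      constructor
      · intro hadj
        exact ⟨σ.symm u, by simpa [SimpleGraph.mem_neighborFinset] using hadj, by simp⟩
      · rintro ⟨x, hx, rfl⟩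
        simpa [SimpleGraph.mem_neighborFinset] using hx
    rw [SimpleGraph.degree, this, Finset.card_map]
    rfl
  ext i j
  simp only [sLap, Matrix.add_apply, Matrix.submatrix_apply, Matrix.diagonal_apply]
  have hadj : (H.map σ.toEmbedding).adjMatrix ℝ i j = H.adjMatrix ℝ (σ.symm i) (σ.symm j) := by
    simp only [SimpleGraph.adjMatrix_apply, map_equiv_adj]
  by_cases hij : i = j
  · subst hij
    rw [if_pos rfl, if_pos rfl]
    congr 1
    · exact_mod_cast congrArg (Nat.cast : ℕ → ℝ) ((degree_congr i _ _).trans (hdeg i))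
    · exact (adjMatrix_congr _ _ i i).trans hadj
  · have h2 : ¬ σ.symm i = σ.symm j := fun hc => hij (σ.symm.injective hc)
    rw [if_neg hij, if_neg h2, zero_add, zero_add]
    exact (adjMatrix_congr _ _ i j).trans hadj

lemma SLEE_map [Fintype V] (H : SimpleGraph V) (σ : V ≃ V) :
    SLEE (H.map σ.toEmbedding) = SLEE H := by
  classical
  rw [SLEE_eq_tsum, SLEE_eq_tsum]
  congr 1
  ext k
  congr 1
  rw [sLap_map]
  have h1 : (sLap H).submatrix σ.symm σ.symm = Matrix.reindexAlgEquiv ℝ ℝ σ (sLap H) := by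
    simp [Matrix.reindexAlgEquiv, Matrix.reindex]
  rw [h1, ← map_pow]
  simp only [Matrix.reindexAlgEquiv_apply, Matrix.reindex_apply]
  unfold Matrix.trace
  simp only [Matrix.diag_apply, Matrix.submatrix_apply]
  exact Equiv.sum_comp σ.symm (fun j => (sLap H ^ k) j j)

/-- `Kₙ − e` is the unique graph with maximum SLEE among graphs on `n ≥ 3`
vertices with diameter 2. -/
theorem max_SLEE_diam_two [Fintype V] {n : ℕ} (hn : Fintype.card V = n) (h3 : 3 ≤ n)
    (a b : V) (hab : a ≠ b) :
    ((⊤ : SimpleGraph V).deleteEdges {s(a, b)}).diam = 2 ∧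
    ∀ H : SimpleGraph V, H.diam = 2 →
      SLEE H ≤ SLEE ((⊤ : SimpleGraph V).deleteEdges {s(a, b)}) ∧
      (SLEE H = SLEE ((⊤ : SimpleGraph V).deleteEdges {s(a, b)}) →
        Nonempty (H ≃g (⊤ : SimpleGraph V).deleteEdges {s(a, b)})) := by
  have hnt : Nontrivial V := Fintype.one_lt_card_iff_nontrivial.mp (by omega)
  constructor
  · have hnt : Nontrivial V := Fintype.one_lt_card_iff_nontrivial.mp (by omega)
    set K := (⊤ : SimpleGraph V).deleteEdges {s(a, b)} with hK
    have hKadj : ∀ u v, K.Adj u v ↔ u ≠ v ∧ s(u, v) ≠ s(a, b) := by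
      intro u v
      simp [hK, SimpleGraph.deleteEdges_adj]
    have hKab : ¬ K.Adj a b := by simp [hKadj]
    obtain ⟨c, hca, hcb⟩ : ∃ c, c ≠ a ∧ c ≠ b := by
      by_contra hc
      push_neg at hc
      have hsub : (Finset.univ : Finset V) ⊆ {a, b} := by
        intro z _
        by_cases hz : z = a
        · simp [hz]
        · simp [hc z hz]
      have h1 := Finset.card_le_card hsub
      rw [Finset.card_univ, hn] at h1
      have h2 : ({a, b} : Finset V).card ≤ 2 :=
        (Finset.card_insert_le _ _).trans (by simp)
      omega
    have hKac : K.Adj a c := by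
      rw [hKadj]
      refine ⟨Ne.symm hca, fun h => ?_⟩
      rw [Sym2.eq_iff] at h
      rcases h with ⟨-, h⟩ | ⟨h1, h2⟩
      · exact hcb h
      · exact hab h1
    have hKcb : K.Adj c b := by
      rw [hKadj]
      refine ⟨hcb, fun h => ?_⟩
      rw [Sym2.eq_iff] at h
      rcases h with ⟨h1, -⟩ | ⟨h1, -⟩
      · exact hca h1
      · exact hcb h1
    have h2le : ∀ u v, K.edist u v ≤ 2 := by
      intro u v
      by_cases huv : u = v
      · subst huv
        simp [SimpleGraph.edist_self]
      by_cases hadj : K.Adj u v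
      · rw [SimpleGraph.edist_eq_one_iff_adj.mpr hadj]
        exact one_le_two
      · have hs : s(u, v) = s(a, b) := by
          by_contra hs
          exact hadj ((hKadj u v).mpr ⟨huv, hs⟩)
        have hab2 : K.edist a b ≤ 2 := by
          calc K.edist a b ≤ K.edist a c + K.edist c b := SimpleGraph.edist_triangle
          _ = 1 + 1 := by
              rw [SimpleGraph.edist_eq_one_iff_adj.mpr hKac,
                SimpleGraph.edist_eq_one_iff_adj.mpr hKcb]
          _ = 2 := one_add_one_eq_two
        rw [Sym2.eq_iff] at hs
        rcases hs with ⟨rfl, rfl⟩ | ⟨rfl, rfl⟩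
        · exact hab2
        · rw [SimpleGraph.edist_comm]
          exact hab2
    have hge : (2 : ℕ∞) ≤ K.edist a b := by
      have h0 : 0 < K.edist a b := SimpleGraph.edist_pos_of_ne hab
      have h1 : K.edist a b ≠ 1 := fun h => hKab (SimpleGraph.edist_eq_one_iff_adj.mp h)
      have hlt : 1 < K.edist a b := lt_of_le_of_ne (Order.one_le_iff_pos.mpr h0) (Ne.symm h1)
      have := Order.add_one_le_of_lt hlt
      rwa [one_add_one_eq_two] at this
    have hediam : K.ediam = 2 :=
      le_antisymm (SimpleGraph.ediam_le_of_edist_le h2le)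
        (le_trans hge SimpleGraph.edist_le_ediam)
    rw [SimpleGraph.diam, hediam]
    rfl
  intro H hH
  have hHne : H ≠ ⊤ := by
    intro h
    rw [h, SimpleGraph.diam_top] at hH
    omega
  obtain ⟨x, y, hxy, hnadj⟩ : ∃ x y, x ≠ y ∧ ¬ H.Adj x y := by
    by_contra hc
    push_neg at hc
    apply hHne
    ext u v
    simp only [SimpleGraph.top_adj]
    exact ⟨fun h => h.ne, fun h => hc u v h⟩
  set τ : V ≃ V := Equiv.swap x a with hτ
  set σ : V ≃ V := τ.trans (Equiv.swap (τ y) b) with hσ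
  have hτx : τ x = a := Equiv.swap_apply_left x a
  have hya : τ y ≠ a := by
    rw [← hτx]
    exact fun h => hxy (τ.injective h).symm
  have hσx : σ x = a := by
    rw [hσ, Equiv.trans_apply, hτx]
    exact Equiv.swap_apply_of_ne_of_ne (Ne.symm hya) hab
  have hσy : σ y = b := by
    rw [hσ, Equiv.trans_apply]
    exact Equiv.swap_apply_left (τ y) b
  set K := (⊤ : SimpleGraph V).deleteEdges {s(a, b)} with hK
  have hKadj : ∀ u v, K.Adj u v ↔ u ≠ v ∧ s(u, v) ≠ s(a, b) := by
    intro u v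
    simp [hK, SimpleGraph.deleteEdges_adj]
  set H' := H.map σ.toEmbedding with hH'
  have hno : ¬ H'.Adj a b := by
    rw [hH', map_equiv_adj]
    have e1 : σ.symm a = x := by rw [← hσx]; simp
    have e2 : σ.symm b = y := by rw [← hσy]; simp
    rw [e1, e2]
    exact hnadj
  have hle : H' ≤ K := by
    intro u v huv
    rw [hKadj]
    refine ⟨huv.ne, fun hc => ?_⟩
    rw [Sym2.eq_iff] at hc
    rcases hc with ⟨rfl, rfl⟩ | ⟨rfl, rfl⟩
    · exact hno huv
    · exact hno huv.symm
  have hiso : H ≃g H' := by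
    refine ⟨σ, ?_⟩
    intro u v
    rw [hH', map_equiv_adj]
    simp
  have hSLEEeq : SLEE H' = SLEE H := SLEE_map H σ
  rcases eq_or_lt_of_le hle with heq | hlt
  · refine ⟨le_of_eq (by rw [← hSLEEeq, heq]), fun _ => ⟨heq ▸ hiso⟩⟩
  · have hlt2 := SLEE_lt_SLEE hlt
    rw [hSLEEeq] at hlt2
    exact ⟨le_of_lt hlt2, fun h => absurd h (ne_of_lt hlt2)⟩
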